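/- Let f be an absolute normalized norm on ℝ^N. If x, y ∈ ℝ^N satisfy |x_i| ≤ |y_i| for every i ≤ N, then f(x) ≤ f(y). -/

import Mathlib

/-- `f` is a norm on `ℝ^N`. -/
def IsNormOn {N : ℕ} (f : (Fin N → ℝ) → ℝ) : Prop :=
  (∀ x, f x = 0 ↔ x = 0) ∧
  (∀ (a : ℝ) (x), f (a • x) = |a| * f x) ∧
  (∀ x y, f (x + y) ≤ f x + f y)

/-- `f` is absolute: it only depends on the absolute values of the coordinates. -/
def IsAbsoluteNorm {N : ℕ} (f : (Fin N → ℝ) → ℝ) : Prop :=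
  ∀ x, f x = f (fun i => |x i|)

/-- `f` is normalized: it takes the value `1` at each canonical basis vector. -/
def IsNormalizedNorm {N : ℕ} (f : (Fin N → ℝ) → ℝ) : Prop :=
  ∀ i, f (Pi.single i 1) = 1

lemma step_aux {N : ℕ} (f : (Fin N → ℝ) → ℝ)
    (hnorm : IsNormOn f) (habs : IsAbsoluteNorm f)
    (y : Fin N → ℝ) (i : Fin N) (t : ℝ) (ht : |t| ≤ |y i|) :
    f (Function.update y i t) ≤ f y := by
  obtain ⟨h0, hsmul, hadd⟩ := hnorm
  set s := y i with hs
  rcases eq_or_ne s 0 with hs0 | hs0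
  · have ht0 : t = 0 := by
      have : |t| ≤ 0 := by rw [hs0, abs_zero] at ht; exact ht
      exact abs_eq_zero.mp (le_antisymm this (abs_nonneg t))
    have : Function.update y i t = y := by
      rw [ht0, ← hs0, hs]; exact Function.update_eq_self i y
    rw [this]
  · set a := (s + t) / (2 * s) with ha
    set b := (s - t) / (2 * s) with hb
    set v := Function.update y i (-s) with hv
    have habpos : 0 ≤ a ∧ 0 ≤ b := by
      rcases lt_or_gt_of_ne hs0 with hneg | hpos
      · have h1 : - -s ≤ t ∧ t ≤ -s := abs_le.mp (le_trans ht (le_of_eq (abs_of_neg hneg)))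
        rw [neg_neg] at h1
        constructor
        · rw [ha, div_nonneg_iff]; right; constructor <;> linarith [h1.1, h1.2]
        · rw [hb, div_nonneg_iff]; right; constructor <;> linarith [h1.1, h1.2]
      · have h1 : -s ≤ t ∧ t ≤ s := abs_le.mp (le_trans ht (le_of_eq (abs_of_pos hpos)))
        constructor
        · rw [ha]; apply div_nonneg <;> linarith [h1.1, h1.2]
        · rw [hb]; apply div_nonneg <;> linarith [h1.1, h1.2]
    have hsum : a + b = 1 := by
      rw [ha, hb]; field_simp; ring
    have hdecomp : Function.update y i t = a • y + b • v := by
      funext j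
      by_cases hj : j = i
      · subst hj
        simp only [Function.update_self, Pi.add_apply, Pi.smul_apply, smul_eq_mul, hv,
          Function.update_self]
        rw [ha, hb]; field_simp; ring
      · simp only [Function.update_of_ne hj, Pi.add_apply, Pi.smul_apply, smul_eq_mul, hv,
          Function.update_of_ne hj]
        have : (a + b) * y j = y j := by rw [hsum, one_mul]
        linarith [this]
    have hfv : f v = f y := by
      rw [habs v, habs y]
      congr 1
      funext j
      by_cases hj : j = i
      · subst hj; simp [hv, abs_neg, hs]
      · simp [hv, Function.update_of_ne hj]
    calc f (Function.update y i t) = f (a • y + b • v) := by rw [hdecomp]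
      _ ≤ f (a • y) + f (b • v) := hadd _ _
      _ = |a| * f y + |b| * f v := by rw [hsmul, hsmul]
      _ = a * f y + b * f y := by
          rw [abs_of_nonneg habpos.1, abs_of_nonneg habpos.2, hfv]
      _ = f y := by rw [← add_mul, hsum, one_mul]

/-- If `f` is an absolute normalized norm on `ℝ^N` and `|x i| ≤ |y i|` for every `i`,
then `f x ≤ f y`. -/
theorem stmt0 {N : ℕ} (f : (Fin N → ℝ) → ℝ)
    (hnorm : IsNormOn f) (habs : IsAbsoluteNorm f) (hnormalized : IsNormalizedNorm f)
    (x y : Fin N → ℝ) (hxy : ∀ i, |x i| ≤ |y i|) :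
    f x ≤ f y := by
  have key : ∀ s : Finset (Fin N), f (fun i => if i ∈ s then x i else y i) ≤ f y := by
    intro s
    induction s using Finset.induction_on with
    | empty => simp
    | @insert j s hj ih =>
        set z : Fin N → ℝ := fun i => if i ∈ s then x i else y i with hz
        have heq : (fun i => if i ∈ insert j s then x i else y i) =
            Function.update z j (x j) := by
          funext i
          by_cases hij : i = j
          · subst hij; simp [Function.update_self]
          · simp [Function.update_of_ne hij, hz, hij]
        rw [heq]
        have hzj : z j = y j := by simp [hz, hj]
        have := step_aux f hnorm habs z j (x j) (by rw [hzj]; exact hxy j)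
        exact le_trans this ih
  have := key Finset.univ
  simpa using this
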